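/- Suppose a countable space X = {q_ℓ : ℓ ∈ ω} has a partition {Q_t : t ∈ 2^{<ω}} into dense sets, and there is a family {f_α : α < 𝔟} of functions in ω^ω that is unbounded with respect to ≤* together with points {ρ_α : α < 𝔟} ⊆ 2^ω such that each set B_α = ⋃{Q_{ρ_α↾n} ∩ {q_ℓ : ℓ < f_α(n)} : n ∈ ω} is closed and discrete in X. Then X is not H-separable: there is a sequence of dense sets (indexed by 2^{<ω}) admitting no H-selection. -/
import Mathlib


/-- The initial segment of `ρ : 2^ω` of length `n`, as an element of `2^{<ω}`. -/
def seg (ρ : ℕ → Bool) (n : ℕ) : List Bool := List.ofFn (fun i : Fin n => ρ i)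

/-- `B = ⋃_n (Q_{ρ↾n} ∩ {q_ℓ : ℓ < f(n)})`. -/
def Bset {X : Type*} (qe : ℕ → X) (Qt : List Bool → Set X) (ρ : ℕ → Bool)
    (f : ℕ → ℕ) : Set X :=
  ⋃ n, Qt (seg ρ n) ∩ {x | ∃ ℓ < f n, x = qe ℓ}

/-- Lemma 3.1: if a countable space has a partition into dense sets `Q_t` and an
unbounded family `f_α` with branches `ρ_α` such that each `B_α` is closed and
discrete, then the space is not H-separable: the dense sequence `{Q_t}` admits no
H-selection. -/
theorem not_HSeparable_of_closed_discrete_Bsets {X : Type*} [TopologicalSpace X]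
    [Countable X] (qe : ℕ → X) (hqe : Function.Surjective qe)
    (Qt : List Bool → Set X)
    (hdense : ∀ t, Dense (Qt t))
    (hdisj : Pairwise (Function.onFun Disjoint Qt))
    (hcover : (⋃ t, Qt t) = Set.univ)
    {ι : Type*} (f : ι → ℕ → ℕ)
    (hunb : ∀ g : ℕ → ℕ, ∃ i, {n | g n < f i n}.Infinite)
    (ρ : ι → ℕ → Bool)
    (hBclosed : ∀ i, IsClosed (Bset qe Qt (ρ i) (f i)))
    (hBdiscrete : ∀ i, ∀ x ∈ Bset qe Qt (ρ i) (f i),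
      ∃ W : Set X, IsOpen W ∧ x ∈ W ∧ W ∩ Bset qe Qt (ρ i) (f i) = {x}) :
    ∃ D : List Bool → Set X, (∀ t, Dense (D t)) ∧
      ∀ H : List Bool → Finset X, (∀ t, (H t : Set X) ⊆ D t) →
        ∃ A : Set (List Bool), A.Infinite ∧
          ¬ Dense (⋃ t ∈ A, (H t : Set X)) := by
  classical
  refine ⟨Qt, hdense, ?_⟩
  intro H hH
  -- a section of qe
  set e : X → ℕ := fun x => (hqe x).choose with he
  have he' : ∀ x, qe (e x) = x := fun x => (hqe x).choose_spec
  -- bound the indices of elements of H t for t of length n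
  set g : ℕ → ℕ := fun n =>
    1 + (Finset.univ : Finset (Fin n → Bool)).sup (fun v => (H (List.ofFn v)).sup e) with hg
  obtain ⟨i, hI⟩ := hunb g
  set B := Bset qe Qt (ρ i) (f i) with hB
  set I : Set ℕ := {n | g n < f i n} with hIdef
  have hsub : ∀ n ∈ I, (H (seg (ρ i) n) : Set X) ⊆ B := by
    intro n hn x hx
    have h1 : e x ≤ (H (seg (ρ i) n)).sup e := Finset.le_sup hx
    have h2 : (H (seg (ρ i) n)).sup e ≤
        (Finset.univ : Finset (Fin n → Bool)).sup (fun v => (H (List.ofFn v)).sup e) := by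
      have := Finset.le_sup (f := fun v : Fin n → Bool => (H (List.ofFn v)).sup e)
        (Finset.mem_univ (fun j : Fin n => ρ i j))
      simpa [seg] using this
    have hex : e x < f i n := by
      have hgn : g n < f i n := hn
      have h3 : e x ≤ (Finset.univ : Finset (Fin n → Bool)).sup
          (fun v => (H (List.ofFn v)).sup e) := h1.trans h2
      simp only [hg] at hgn
      omega
    exact Set.mem_iUnion.2 ⟨n, ⟨hH _ hx, ⟨e x, hex, (he' x).symm⟩⟩⟩
  refine ⟨(fun n => seg (ρ i) n) '' I, ?_, ?_⟩
  · refine Set.Infinite.image ?_ hI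
    intro m hm n hn hmn
    have := congrArg List.length hmn
    simpa [seg] using this
  · intro hd
    have hU : (⋃ t ∈ (fun n => seg (ρ i) n) '' I, (H t : Set X)) ⊆ B := by
      intro x hx
      simp only [Set.mem_iUnion] at hx
      obtain ⟨t, ⟨n, hn, rfl⟩, hx⟩ := hx
      exact hsub n hn hx
    have hBuniv : B = Set.univ := by
      apply Set.eq_univ_of_univ_subset
      have := hd.closure_eq
      calc (Set.univ : Set X) = closure (⋃ t ∈ (fun n => seg (ρ i) n) '' I, (H t : Set X)) :=
            this.symm
        _ ⊆ closure B := closure_mono hU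
        _ = B := (hBclosed i).closure_eq
    -- every point is isolated, contradicting disjoint dense sets
    set x0 : X := qe 0 with hx0
    have hx0B : x0 ∈ B := by rw [hBuniv]; trivial
    obtain ⟨W, hWo, hxW, hWB⟩ := hBdiscrete i x0 hx0B
    have hWx : W = {x0} := by
      rw [← hB, hBuniv, Set.inter_univ] at hWB; exact hWB
    have hmem : ∀ t, x0 ∈ Qt t := by
      intro t
      obtain ⟨y, hyW, hyQ⟩ := (hdense t).inter_open_nonempty W hWo ⟨x0, hxW⟩
      have : y = x0 := by rw [hWx] at hyW; exact hyW
      rwa [this] at hyQ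
    have hne : ([] : List Bool) ≠ [true] := by simp
    exact Set.disjoint_left.mp (hdisj hne) (hmem []) (hmem [true])
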